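/- In the greedy top-k selection over weighted set slices: let A_y = {σ ∈ S : y ∈ σ(x)} with nonnegative weight function w, and select ŷ^{(1)},…,ŷ^{(k)} greedily so that ŷ^{(i)} maximizes w(A_y \ ⋃_{j<i} A_{ŷ^{(j)}}) over y not yet chosen. Let U = ⋃_{i=1}^k A_{ŷ^{(i)}}. Then for any label y, w(U \ A_y) ≥ k · w(A_y \ U). -/

import Mathlib

/-- Key greedy covering inequality: the weight of U \ A_y is at least k times
the weight of A_y \ U, where U is the union of the k greedily chosen slices. -/
theorem stmt13 {H Y : Type*} [DecidableEq H] [DecidableEq Y] [Fintype H]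
    (w : H → ℝ) (hw : ∀ h, 0 ≤ w h)
    (A : Y → Finset H) (k : ℕ) (yh : Fin k → Y)
    (hgreedy : ∀ i : Fin k, ∀ y : Y, (∀ j : Fin k, j < i → yh j ≠ y) →
      ∑ h ∈ A y \ (Finset.univ.filter (fun j : Fin k => j < i)).biUnion (fun j => A (yh j)),
          w h
        ≤ ∑ h ∈ A (yh i) \
            (Finset.univ.filter (fun j : Fin k => j < i)).biUnion (fun j => A (yh j)), w h)
    (y : Y) :
    (k : ℝ) * ∑ h ∈ A y \ Finset.univ.biUnion (fun i : Fin k => A (yh i)), w h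
      ≤ ∑ h ∈ Finset.univ.biUnion (fun i : Fin k => A (yh i)) \ A y, w h := by
  classical
  set F : Finset H → ℝ := fun T => ∑ h ∈ T, w h with hF
  set U : ℕ → Finset H :=
    fun n => (Finset.univ.filter (fun j : Fin k => (j : ℕ) < n)).biUnion (fun j => A (yh j))
    with hU
  have hFmono : ∀ {S T : Finset H}, S ⊆ T → F S ≤ F T := fun hST =>
    Finset.sum_le_sum_of_subset_of_nonneg hST (fun h _ _ => hw h)
  have hAsub : ∀ (j : Fin k) (n : ℕ), (j : ℕ) < n → A (yh j) ⊆ U n := by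
    intro j n hjn h hh
    simp only [hU, Finset.mem_biUnion, Finset.mem_filter, Finset.mem_univ, true_and]
    exact ⟨j, hjn, hh⟩
  have hUmono : ∀ {m n : ℕ}, m ≤ n → U m ⊆ U n := by
    intro m n hmn
    simp only [hU]
    apply Finset.biUnion_subset_biUnion_of_subset_left
    intro j hj
    simp only [Finset.mem_filter, Finset.mem_univ, true_and] at *
    omega
  have hUk : U k = Finset.univ.biUnion (fun i : Fin k => A (yh i)) := by
    simp only [hU]
    congr 1
    ext j
    simp [j.isLt]
  set a : ℕ → ℝ := fun n => F (A y \ U n) with ha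
  set m : Fin k → ℝ := fun i => F (A (yh i) \ U i) with hm
  -- greedy step: a i ≤ m i
  have hgreedy' : ∀ i : Fin k, a i ≤ m i := by
    intro i
    by_cases hcase : ∀ j : Fin k, j < i → yh j ≠ y
    · have hfe : (Finset.univ.filter (fun j : Fin k => j < i))
          = Finset.univ.filter (fun j : Fin k => (j : ℕ) < (i : ℕ)) := by
        ext j; simp only [Finset.mem_filter, Fin.lt_def]
      have := hgreedy i y hcase
      rw [hfe] at this
      exact this
    · push_neg at hcase
      obtain ⟨j, hji, hyj⟩ := hcase
      have hsub : A y ⊆ U i := by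
        rw [← hyj]; exact hAsub j i hji
      have : A y \ U i = ∅ := Finset.sdiff_eq_empty_iff_subset.mpr hsub
      simp only [ha, this]
      simp only [hF, Finset.sum_empty]
      exact Finset.sum_nonneg (fun h _ => hw h)
  -- successor: U (i+1) = U i ∪ A (yh i)
  have hUsucc : ∀ i : Fin k, U ((i : ℕ) + 1) = U i ∪ A (yh i) := by
    intro i
    ext h
    simp only [hU, Finset.mem_biUnion, Finset.mem_filter, Finset.mem_univ, true_and,
      Finset.mem_union]
    constructor
    · rintro ⟨j, hj, hh⟩
      rcases Nat.lt_succ_iff_lt_or_eq.mp hj with h' | h'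
      · exact Or.inl ⟨j, h', hh⟩
      · right; rwa [show j = i from Fin.ext h'] at hh
    · rintro (⟨j, hj, hh⟩ | hh)
      · exact ⟨j, Nat.lt_succ_of_lt hj, hh⟩
      · exact ⟨i, Nat.lt_succ_self _, hh⟩
  -- step identity: a i = a (i+1) + F ((A (yh i) \ U i) ∩ A y)
  have hstep : ∀ i : Fin k, a (i : ℕ) = a ((i : ℕ) + 1) + F ((A (yh i) \ U i) ∩ A y) := by
    intro i
    have h1 : A y \ U ((i : ℕ) + 1) = (A y \ U i) \ A (yh i) := by
      rw [hUsucc i]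
      ext h; simp only [Finset.mem_sdiff, Finset.mem_union]
      tauto
    have h2 : (A y \ U i) ∩ A (yh i) = (A (yh i) \ U i) ∩ A y := by
      ext h; simp only [Finset.mem_sdiff, Finset.mem_inter]
      tauto
    have h3 := Finset.sum_inter_add_sum_sdiff (A y \ U i) (A (yh i)) w
    simp only [ha, hF]
    rw [h1, ← h2, ← h3]
    ring
  -- m decomposition
  have hmdec : ∀ i : Fin k, m i = F ((A (yh i) \ U i) \ A y) + F ((A (yh i) \ U i) ∩ A y) := by
    intro i
    have h3 := Finset.sum_inter_add_sum_sdiff (A (yh i) \ U i) (A y) w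
    simp only [hm, hF] at *
    linarith
  -- decomposition of U k \ A y as disjoint union
  have hUnion : U k \ A y = Finset.univ.biUnion (fun i : Fin k => (A (yh i) \ U i) \ A y) := by
    ext h
    simp only [Finset.mem_sdiff, Finset.mem_biUnion, Finset.mem_univ, true_and]
    constructor
    · rintro ⟨hUk', hy⟩
      have hex : ∃ i : Fin k, h ∈ A (yh i) := by
        simp only [hU, Finset.mem_biUnion, Finset.mem_filter, Finset.mem_univ, true_and] at hUk'
        obtain ⟨j, _, hh⟩ := hUk'
        exact ⟨j, hh⟩
      set s := Finset.univ.filter (fun i : Fin k => h ∈ A (yh i)) with hs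
      have hne : s.Nonempty := by
        obtain ⟨i, hi⟩ := hex
        exact ⟨i, by simp [hs, hi]⟩
      set i0 := s.min' hne with hi0
      have hi0mem : h ∈ A (yh i0) := by
        have := s.min'_mem hne
        simp only [hs, Finset.mem_filter] at this
        exact this.2
      refine ⟨i0, ⟨hi0mem, ?_⟩, hy⟩
      intro hhU
      simp only [hU, Finset.mem_biUnion, Finset.mem_filter, Finset.mem_univ, true_and] at hhU
      obtain ⟨j, hj, hhj⟩ := hhU
      have hjs : j ∈ s := by simp [hs, hhj]
      have := s.min'_le j hjs
      omega
    · rintro ⟨i, ⟨hi, hiU⟩, hy⟩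
      exact ⟨hAsub i k i.isLt hi, hy⟩
  have hdisj : (↑(Finset.univ : Finset (Fin k)) : Set (Fin k)).PairwiseDisjoint
      (fun i : Fin k => (A (yh i) \ U i) \ A y) := by
    intro i _ j _ hij
    simp only [Function.onFun]
    rcases lt_or_gt_of_ne hij with hlt | hlt
    · rw [Finset.disjoint_left]
      intro h hhi hhj
      simp only [Finset.mem_sdiff] at hhi hhj
      exact hhj.1.2 (hAsub i j (Fin.lt_def.mp hlt) hhi.1.1)
    · rw [Finset.disjoint_left]
      intro h hhi hhj
      simp only [Finset.mem_sdiff] at hhi hhj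
      exact hhi.1.2 (hAsub j i (Fin.lt_def.mp hlt) hhj.1.1)
  have hsum : F (U k \ A y) = ∑ i : Fin k, F ((A (yh i) \ U i) \ A y) := by
    rw [hUnion]
    exact Finset.sum_biUnion hdisj
  -- a is antitone, a k ≤ a (i+1)
  have hak : ∀ i : Fin k, a k ≤ a ((i : ℕ) + 1) := by
    intro i
    apply hFmono
    exact Finset.sdiff_subset_sdiff (le_refl _) (hUmono i.isLt)
  -- combine
  have hterm : ∀ i : Fin k, a k ≤ F ((A (yh i) \ U i) \ A y) := by
    intro i
    have h1 := hgreedy' i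
    have h2 := hstep i
    have h3 := hmdec i
    have h4 := hak i
    linarith
  have hfinal : (k : ℝ) * a k ≤ F (U k \ A y) := by
    rw [hsum]
    calc (k : ℝ) * a k = ∑ _i : Fin k, a k := by
          simp [Finset.sum_const, mul_comm]
      _ ≤ ∑ i : Fin k, F ((A (yh i) \ U i) \ A y) := Finset.sum_le_sum (fun i _ => hterm i)
  rw [← hUk]
  simpa only [ha, hF] using hfinal
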